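/- Let S_n = ∑_{k=1}^n X'_k where X'_1, X'_2, … are i.i.d. symmetric ℤ-valued random variables. If for every even n there exists a point x ∈ {−3n,…,3n} with P(S_n = x) ≥ 0.5/(6n+1), then P(S_n = 0) ≥ 0.5/(6n+1) for every even n, and consequently ∑_{n=1}^∞ P(S_n = 0) = ∞. -/

import Mathlib

open MeasureTheory Finset ProbabilityTheory
open scoped ENNReal NNReal

private lemma point_conv' {Ω : Type*} [MeasurableSpace Ω] (μ : Measure Ω)
    {A B : Ω → ℤ} (hA : Measurable A) (hB : Measurable B)
    (h : IndepFun A B μ) (x : ℤ) :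
    μ {ω | A ω + B ω = x} = ∑' j : ℤ, μ {ω | A ω = j} * μ {ω | B ω = x - j} := by
  have hset : {ω | A ω + B ω = x} = ⋃ j : ℤ, ({ω | A ω = j} ∩ {ω | B ω = x - j}) := by
    ext ω
    simp only [Set.mem_setOf_eq, Set.mem_iUnion, Set.mem_inter_iff]
    constructor
    · intro h; exact ⟨A ω, rfl, by omega⟩
    · rintro ⟨j, rfl, hj⟩; omega
  rw [hset, measure_iUnion]
  · refine tsum_congr fun j => ?_
    have := h.measure_inter_preimage_eq_mul {j} {x - j} (measurableSet_singleton _)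
      (measurableSet_singleton _)
    exact this
  · intro i j hij
    simp only [Function.onFun, Set.disjoint_left]
    rintro ω ⟨h1, -⟩ ⟨h2, -⟩
    exact hij (h1.symm.trans h2)
  · intro j
    exact (hA (measurableSet_singleton j)).inter (hB (measurableSet_singleton _))

private lemma sum_decomp' {Ω : Type*} [MeasurableSpace Ω] {μ : Measure Ω} {X : ℕ → Ω → ℤ}
    (hXmeas : ∀ k, Measurable (X k))
    (hindep : ProbabilityTheory.iIndepFun X μ)
    {H : Finset ℕ} {i : ℕ} (hi : i ∈ H) (x : ℤ) :
    μ {ω | ∑ k ∈ H, X k ω = x}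
      = ∑' j : ℤ, μ {ω | X i ω = j} * μ {ω | ∑ k ∈ H.erase i, X k ω = x - j} := by
  have hBmeas : Measurable (fun ω => ∑ k ∈ H.erase i, X k ω) :=
    Finset.measurable_sum _ fun k _ => hXmeas k
  have hind : IndepFun (X i) (fun ω => ∑ k ∈ H.erase i, X k ω) μ := by
    have h0 := (hindep.indepFun_finsetSum_of_notMem hXmeas (Finset.notMem_erase i H)).symm
    have : (fun ω => ∑ k ∈ H.erase i, X k ω) = ∑ j ∈ H.erase i, X j := by
      funext ω; simp [Finset.sum_apply]
    rw [this]; exact h0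
  have hset : {ω | ∑ k ∈ H, X k ω = x} = {ω | X i ω + ∑ k ∈ H.erase i, X k ω = x} := by
    ext ω
    rw [Set.mem_setOf_eq, Set.mem_setOf_eq, ← Finset.add_sum_erase H (fun k => X k ω) hi]
  rw [hset, point_conv' μ (hXmeas i) hBmeas hind x]

private lemma card_invariant' {Ω : Type*} [MeasurableSpace Ω] {μ : Measure Ω} {X : ℕ → Ω → ℤ}
    (hXmeas : ∀ k, Measurable (X k))
    (hindep : ProbabilityTheory.iIndepFun X μ)
    (hident : ∀ k, μ.map (X k) = μ.map (X 0)) :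
    ∀ (n : ℕ) (F G : Finset ℕ), F.card = n → G.card = n →
      ∀ x : ℤ, μ {ω | ∑ k ∈ F, X k ω = x} = μ {ω | ∑ k ∈ G, X k ω = x} := by
  have hX : ∀ (i : ℕ) (j : ℤ), μ {ω | X i ω = j} = μ {ω | X 0 ω = j} := by
    intro i j
    have h1 : μ {ω | X i ω = j} = μ.map (X i) {j} := by
      rw [Measure.map_apply (hXmeas i) (measurableSet_singleton j)]; rfl
    have h2 : μ {ω | X 0 ω = j} = μ.map (X 0) {j} := by
      rw [Measure.map_apply (hXmeas 0) (measurableSet_singleton j)]; rfl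
    rw [h1, h2, hident i]
  intro n
  induction n with
  | zero =>
    intro F G hF hG x
    rw [Finset.card_eq_zero.mp hF, Finset.card_eq_zero.mp hG]
  | succ n ih =>
    intro F G hF hG x
    obtain ⟨i, hi⟩ : F.Nonempty := Finset.card_pos.mp (by omega)
    obtain ⟨i', hi'⟩ : G.Nonempty := Finset.card_pos.mp (by omega)
    rw [sum_decomp' hXmeas hindep hi x, sum_decomp' hXmeas hindep hi' x]
    refine tsum_congr fun j => ?_
    rw [hX i j, hX i' j,
      ih (F.erase i) (G.erase i') (by rw [Finset.card_erase_of_mem hi]; omega)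
        (by rw [Finset.card_erase_of_mem hi']; omega) (x - j)]

private lemma sym_invariant' {Ω : Type*} [MeasurableSpace Ω] {μ : Measure Ω} {X : ℕ → Ω → ℤ}
    (hXmeas : ∀ k, Measurable (X k))
    (hindep : ProbabilityTheory.iIndepFun X μ)
    (hident : ∀ k, μ.map (X k) = μ.map (X 0))
    (hsym : ∀ j : ℤ, μ {ω | X 0 ω = j} = μ {ω | X 0 ω = -j}) :
    ∀ (F : Finset ℕ) (x : ℤ), μ {ω | ∑ k ∈ F, X k ω = x} = μ {ω | ∑ k ∈ F, X k ω = -x} := by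
  have hX : ∀ (i : ℕ) (j : ℤ), μ {ω | X i ω = j} = μ {ω | X 0 ω = j} := by
    intro i j
    have h1 : μ {ω | X i ω = j} = μ.map (X i) {j} := by
      rw [Measure.map_apply (hXmeas i) (measurableSet_singleton j)]; rfl
    have h2 : μ {ω | X 0 ω = j} = μ.map (X 0) {j} := by
      rw [Measure.map_apply (hXmeas 0) (measurableSet_singleton j)]; rfl
    rw [h1, h2, hident i]
  intro F
  induction F using Finset.induction_on with
  | empty =>
    intro x
    have : {ω : Ω | (0:ℤ) = x} = {ω : Ω | (0:ℤ) = -x} := by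
      ext ω; simp only [Set.mem_setOf_eq]; omega
    simpa using congrArg μ this
  | @insert i F hiF ihF =>
    intro x
    have hi : i ∈ insert i F := Finset.mem_insert_self i F
    have he : (insert i F).erase i = F := Finset.erase_insert hiF
    rw [sum_decomp' hXmeas hindep hi x, sum_decomp' hXmeas hindep hi (-x), he]
    rw [← (Equiv.neg ℤ).tsum_eq (fun j => μ {ω | X i ω = j} * μ {ω | ∑ k ∈ F, X k ω = -x - j})]
    refine tsum_congr fun j => ?_
    simp only [Equiv.neg_apply]
    have h1 : μ {ω | X i ω = -j} = μ {ω | X i ω = j} := by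
      rw [hX i (-j), hX i j, ← hsym j]
    have h2 : μ {ω | ∑ k ∈ F, X k ω = -x - -j} = μ {ω | ∑ k ∈ F, X k ω = x - j} := by
      have : -x - -j = -(x - j) := by ring
      rw [this, ← ihF (x - j)]
    rw [h1, h2]

private lemma two_mul_mul_le_sq_add_sq' (a b : ℝ≥0∞) : 2 * (a * b) ≤ a ^ 2 + b ^ 2 := by
  rcases le_total a b with h | h
  · obtain ⟨c, rfl⟩ := exists_add_of_le h
    have : a ^ 2 + (a + c) ^ 2 = 2 * (a * (a + c)) + c ^ 2 := by ring
    rw [this]; exact le_self_add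
  · obtain ⟨c, rfl⟩ := exists_add_of_le h
    have : (b + c) ^ 2 + b ^ 2 = 2 * ((b + c) * b) + c ^ 2 := by ring
    rw [this]; exact le_self_add

/-- For sums `S_n` of i.i.d. symmetric `ℤ`-valued random variables, if for every even `n`
some point `x ∈ {−3n,…,3n}` carries mass `P(S_n = x) ≥ 0.5/(6n+1)`, then for every even `n`
one has `P(S_n = 0) ≥ 0.5/(6n+1)`, and consequently `∑_n P(S_n = 0) = ∞`. -/
theorem stmt_3 {Ω : Type*} [MeasurableSpace Ω] (μ : Measure Ω) [IsProbabilityMeasure μ]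
    (X : ℕ → Ω → ℤ) (hXmeas : ∀ k, Measurable (X k))
    (hindep : ProbabilityTheory.iIndepFun X μ)
    (hident : ∀ k, μ.map (X k) = μ.map (X 0))
    (hsym : ∀ j : ℤ, μ {ω | X 0 ω = j} = μ {ω | X 0 ω = -j})
    (S : ℕ → Ω → ℤ) (hS : ∀ n ω, S n ω = ∑ k ∈ Finset.range n, X k ω)
    (hanti : ∀ n : ℕ, Even n → ∃ x : ℤ, |x| ≤ 3 * n ∧
      ENNReal.ofReal (0.5 / (6 * n + 1)) ≤ μ {ω | S n ω = x}) :
    (∀ n : ℕ, Even n →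
      ENNReal.ofReal (0.5 / (6 * n + 1)) ≤ μ {ω | S n ω = 0}) ∧
    (∑' n : ℕ, μ {ω | S n ω = 0}) = ⊤ := by
  have main : ∀ n : ℕ, Even n →
      ENNReal.ofReal (0.5 / (6 * n + 1)) ≤ μ {ω | S n ω = 0} := by
    intro n hn
    obtain ⟨m, hm⟩ := hn
    -- split S n into two independent halves
    set A : Ω → ℤ := fun ω => ∑ k ∈ Finset.range m, X k ω with hA
    set B : Ω → ℤ := fun ω => ∑ k ∈ Finset.Ico m (m + m), X k ω with hB
    have hAmeas : Measurable A := Finset.measurable_sum _ fun k _ => hXmeas k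
    have hBmeas : Measurable B := Finset.measurable_sum _ fun k _ => hXmeas k
    have hsplit : ∀ ω, S n ω = A ω + B ω := by
      intro ω
      rw [hS n ω, hm, Finset.range_eq_Ico,
        ← Finset.sum_Ico_consecutive (fun k => X k ω) (Nat.zero_le m) (Nat.le_add_right m m),
        ← Finset.range_eq_Ico]
    have hdisj : Disjoint (Finset.range m) (Finset.Ico m (m + m)) := by
      simp only [Finset.disjoint_left, Finset.mem_range, Finset.mem_Ico]
      omega
    have hAB : IndepFun A B μ := by
      have h := hindep.indepFun_finset (Finset.range m) (Finset.Ico m (m + m)) hdisj hXmeas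
      have hφ : Measurable fun v : (Finset.range m) → ℤ => ∑ i, v i := by fun_prop
      have hψ : Measurable fun v : (Finset.Ico m (m + m)) → ℤ => ∑ i, v i := by fun_prop
      have := h.comp hφ hψ
      have e1 : ((fun v : (Finset.range m) → ℤ => ∑ i, v i) ∘
          fun a (i : Finset.range m) => X i a) = A := by
        funext a
        simp only [Function.comp_apply, hA]
        exact Finset.sum_coe_sort (Finset.range m) (fun k => X k a)
      have e2 : ((fun v : (Finset.Ico m (m + m)) → ℤ => ∑ i, v i) ∘
          fun a (i : Finset.Ico m (m + m)) => X i a) = B := by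
        funext a
        simp only [Function.comp_apply, hB]
        exact Finset.sum_coe_sort (Finset.Ico m (m + m)) (fun k => X k a)
      rwa [e1, e2] at this
    set p : ℤ → ℝ≥0∞ := fun j => μ {ω | A ω = j} with hp
    have hBp : ∀ j : ℤ, μ {ω | B ω = j} = p j := by
      intro j
      exact card_invariant' hXmeas hindep hident m (Finset.Ico m (m + m)) (Finset.range m)
        (by rw [Nat.card_Ico]; omega) (Finset.card_range m) j
    have hpsym : ∀ j : ℤ, p (-j) = p j :=
      fun j => (sym_invariant' hXmeas hindep hident hsym (Finset.range m) j).symm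
    have hmass : ∀ x : ℤ, μ {ω | S n ω = x} = ∑' j : ℤ, p j * p (x - j) := by
      intro x
      have hset : {ω | S n ω = x} = {ω | A ω + B ω = x} := by
        ext ω; rw [Set.mem_setOf_eq, Set.mem_setOf_eq, hsplit ω]
      rw [hset, point_conv' μ hAmeas hBmeas hAB x]
      exact tsum_congr fun j => by rw [hBp]
    -- 0 is a mode
    have hmode : ∀ x : ℤ, μ {ω | S n ω = x} ≤ μ {ω | S n ω = 0} := by
      intro x
      rw [hmass x, hmass 0]
      have h0 : ∑' j : ℤ, p j * p (0 - j) = ∑' j : ℤ, p j * p j :=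
        tsum_congr fun j => by rw [zero_sub, hpsym]
      rw [h0]
      have h2 : (2 : ℝ≥0∞) * ∑' j : ℤ, p j * p (x - j) ≤ 2 * ∑' j : ℤ, p j * p j := by
        rw [← ENNReal.tsum_mul_left, ← ENNReal.tsum_mul_left]
        calc ∑' j : ℤ, 2 * (p j * p (x - j))
            ≤ ∑' j : ℤ, (p j ^ 2 + p (x - j) ^ 2) :=
              ENNReal.tsum_le_tsum fun j => two_mul_mul_le_sq_add_sq' _ _
          _ = (∑' j : ℤ, p j ^ 2) + ∑' j : ℤ, p (x - j) ^ 2 := ENNReal.tsum_add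
          _ = (∑' j : ℤ, p j ^ 2) + ∑' j : ℤ, p j ^ 2 := by
              refine congrArg (fun t => (∑' j : ℤ, p j ^ 2) + t) ?_
              exact (Equiv.subLeft x).tsum_eq (fun j => p j ^ 2)
          _ = ∑' j : ℤ, 2 * (p j * p j) := by
              rw [← ENNReal.tsum_add]
              exact tsum_congr fun j => by ring
      exact (ENNReal.mul_le_mul_iff_right (by norm_num) (by norm_num)).mp h2
    obtain ⟨x, -, hxle⟩ := hanti n ⟨m, hm⟩
    exact hxle.trans (hmode x)
  refine ⟨main, ?_⟩
  have hinj : Function.Injective (fun k : ℕ => 2 * k) := fun a b hab => by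
    have : 2 * a = 2 * b := hab
    omega
  have hle1 : ∑' k : ℕ, μ {ω | S (2 * k) ω = 0} ≤ ∑' n : ℕ, μ {ω | S n ω = 0} :=
    ENNReal.tsum_comp_le_tsum_of_injective hinj (fun n => μ {ω | S n ω = 0})
  have hle2 : ∑' k : ℕ, ENNReal.ofReal (0.5 / (6 * ((2 * k : ℕ) : ℝ) + 1))
      ≤ ∑' k : ℕ, μ {ω | S (2 * k) ω = 0} :=
    ENNReal.tsum_le_tsum fun k => main (2 * k) (even_two_mul k)
  have htop : ∑' k : ℕ, ENNReal.ofReal (0.5 / (6 * ((2 * k : ℕ) : ℝ) + 1)) = ⊤ := by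
    by_contra h
    set c : ℕ → ℝ := fun k => 0.5 / (6 * ((2 * k : ℕ) : ℝ) + 1) with hc
    have hc0 : ∀ k, 0 ≤ c k := fun k => by positivity
    have hne : ∑' k : ℕ, ((c k).toNNReal : ℝ≥0∞) ≠ ⊤ := h
    have hsumN : Summable fun k => (c k).toNNReal :=
      ENNReal.tsum_coe_ne_top_iff_summable.mp hne
    have hsumR : Summable c := by
      have h' := NNReal.summable_coe.mpr hsumN
      have : (fun k => ((c k).toNNReal : ℝ)) = c := by
        funext k; exact Real.coe_toNNReal _ (hc0 k)
      rwa [this] at h'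
    have h26 : Summable fun k : ℕ => (26 : ℝ) * c k := hsumR.mul_left 26
    have hharm : Summable fun k : ℕ => 1 / ((k : ℝ) + 1) := by
      refine h26.of_nonneg_of_le (fun k => by positivity) (fun k => ?_)
      have hk1 : (0 : ℝ) < (k : ℝ) + 1 := by positivity
      have h12 : (0 : ℝ) < 12 * (k : ℝ) + 1 := by positivity
      rw [hc]
      have e : (26 : ℝ) * (0.5 / (6 * ((2 * k : ℕ) : ℝ) + 1)) = 13 / (12 * (k : ℝ) + 1) := by
        push_cast; ring
      rw [e, div_le_div_iff₀ hk1 h12]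
      nlinarith [(Nat.cast_nonneg k : (0 : ℝ) ≤ (k : ℝ))]
    have hfull : Summable fun n : ℕ => 1 / (n : ℝ) := by
      refine (summable_nat_add_iff 1).mp ?_
      convert hharm using 2 with n
      case e'_3 => rfl
      push_cast
      ring
    exact Real.not_summable_one_div_natCast hfull
  rw [← top_le_iff]
  calc (⊤ : ℝ≥0∞) = ∑' k : ℕ, ENNReal.ofReal (0.5 / (6 * ((2 * k : ℕ) : ℝ) + 1)) := htop.symm
    _ ≤ ∑' k : ℕ, μ {ω | S (2 * k) ω = 0} := hle2
    _ ≤ ∑' n : ℕ, μ {ω | S n ω = 0} := hle1
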